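/- There exists a complete lattice C with a countable family of space functions (f_n)_{n∈ℕ}, elements c, e ∈ C with e compact and c ⊒ Δ_I(e) for an infinite index set I, but with c ⋢ Δ_J(e) for every finite J ⊆ I. Concretely: take C = {0, 1/2} ∪ {1/2 + 1/(2n) | n ≥ 1} with the usual order of reals, f_0 ≡ 0, and for n ≥ 1 let f_n(x) = 1/2 + 1/(2n) if x ≥ 1/2 and f_n(x) = 0 otherwise; then with I = ℕ∖{0} and c = e = 1/2, e is compact, c ≥ Δ_I(e), but c < Δ_J(e) for all finite nonempty J ⊆ I. -/

import Mathlib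

/-- The complete lattice for the counterexample: `⊥ < ⋯ < a 2 < a 1 < a 0 < ⊤`. -/
abbrev NCL : Type := WithBot (WithTop ℕᵒᵈ)

/-- The descending chain in `NCL`. -/
def NCL.a (n : ℕ) : NCL := ((OrderDual.toDual n : ℕᵒᵈ) : WithTop ℕᵒᵈ)

/-- The family of functions. -/
noncomputable def NCL.f (n : ℕ) (x : NCL) : NCL :=
  if x = ⊤ ∧ n ≠ 0 then NCL.a n else ⊥

/-- The generic greatest space function below the family on `J`. -/
noncomputable def NCL.Δ (J : Set ℕ) (x : NCL) : NCL :=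
  ⨆ g ∈ {g : NCL → NCL |
    (∀ S : Set NCL, g (sSup S) = sSup (g '' S)) ∧ ∀ i ∈ J, g ≤ NCL.f i}, g x

namespace NCL

lemma a_le_a {m n : ℕ} : a m ≤ a n ↔ n ≤ m := by
  simp [a]

lemma a_lt_top (n : ℕ) : a n < ⊤ := by
  have : a n ≠ ⊤ := by simp [a]
  exact lt_of_le_of_ne le_top this

lemma bot_lt_a (n : ℕ) : (⊥ : NCL) < a n := by
  exact WithBot.bot_lt_coe _

lemma le_all_a {x : NCL} (h : ∀ n : ℕ, 1 ≤ n → x ≤ a n) : x = ⊥ := by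
  induction x using WithBot.recBotCoe with
  | bot => rfl
  | coe y =>
    exfalso
    induction y using WithTop.recTopCoe with
    | top =>
      have := h 1 le_rfl
      simp only [a] at this
      rw [WithBot.coe_le_coe] at this
      exact WithTop.coe_ne_top (top_le_iff.mp this)
    | coe z =>
      have := h (OrderDual.ofDual z + 1) (Nat.le_add_left 1 _)
      simp only [a] at this
      rw [WithBot.coe_le_coe, WithTop.coe_le_coe, OrderDual.le_toDual] at this
      omega

lemma sSup_eq_top {S : Set NCL} (h : sSup S = ⊤) : (⊤ : NCL) ∈ S := by
  by_contra hT
  have hb : ∀ x ∈ S, x ≤ a 0 := by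
    intro x hx
    induction x using WithBot.recBotCoe with
    | bot => exact bot_le
    | coe y =>
      induction y using WithTop.recTopCoe with
      | top => exact (hT hx).elim
      | coe z =>
        simp only [a, WithBot.coe_le_coe, WithTop.coe_le_coe, OrderDual.le_toDual]
        exact Nat.zero_le _
  have : sSup S ≤ a 0 := sSup_le hb
  rw [h] at this
  exact absurd this (not_le_of_gt (a_lt_top 0))

lemma f_sSup (n : ℕ) (S : Set NCL) : f n (sSup S) = sSup (f n '' S) := by
  by_cases hn : n = 0
  · subst hn
    simp only [f, ne_eq, not_true_eq_false, and_false, if_false]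
    refine le_antisymm bot_le (sSup_le ?_)
    rintro y ⟨x, _, rfl⟩
    simp [f]
  · by_cases hT : (⊤ : NCL) ∈ S
    · have hsup : sSup S = ⊤ := top_le_iff.mp (le_sSup hT)
      rw [hsup]
      simp only [f, ne_eq, hn, not_false_eq_true, and_true, if_pos rfl]
      refine le_antisymm (le_sSup ⟨⊤, hT, by simp [f, hn]⟩) (sSup_le ?_)
      rintro y ⟨x, _, rfl⟩
      by_cases hx : x = ⊤
      · simp [f, hx, hn]
      · simp [f, hx]
    · have hsup : sSup S ≠ ⊤ := fun h => hT (sSup_eq_top h)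
      simp only [f, hsup, false_and, if_false]
      refine le_antisymm bot_le (sSup_le ?_)
      rintro y ⟨x, hx, rfl⟩
      have hx' : x ≠ ⊤ := fun h => hT (h ▸ hx)
      simp [f, hx']

lemma f_monotone_in_n {n i : ℕ} (h1 : 1 ≤ i) (h2 : i ≤ n) : f n ≤ f i := by
  intro x
  by_cases hx : x = ⊤
  · have hn : n ≠ 0 := by omega
    have hi : i ≠ 0 := by omega
    simp only [f, hx, hn, hi, ne_eq, not_false_eq_true, and_true, if_pos rfl]
    exact a_le_a.mpr h2
  · simp [f, hx]

lemma Δ_isGreatest (J : Set ℕ) : IsGreatest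
    {g : NCL → NCL | (∀ S : Set NCL, g (sSup S) = sSup (g '' S)) ∧ ∀ i ∈ J, g ≤ f i}
    (Δ J) := by
  set G := {g : NCL → NCL |
    (∀ S : Set NCL, g (sSup S) = sSup (g '' S)) ∧ ∀ i ∈ J, g ≤ f i} with hG
  constructor
  · constructor
    · intro S
      apply le_antisymm
      · refine iSup₂_le fun g hg => ?_
        rw [hg.1 S, sSup_image]
        refine iSup₂_le fun x hx => ?_
        have h1 : g x ≤ Δ J x := le_iSup₂ (f := fun g _ => g x) g hg
        calc g x ≤ Δ J x := h1
          _ ≤ sSup (Δ J '' S) := le_sSup ⟨x, hx, rfl⟩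
      · refine sSup_le ?_
        rintro y ⟨x, hx, rfl⟩
        refine iSup₂_le fun g hg => ?_
        have h1 : g x ≤ g (sSup S) := by
          rw [hg.1 S]
          exact le_sSup ⟨x, hx, rfl⟩
        exact h1.trans (le_iSup₂ (f := fun g _ => g (sSup S)) g hg)
    · intro i hi x
      exact iSup₂_le fun g hg => hg.2 i hi x
  · intro g hg x
    exact le_iSup₂ (f := fun g _ => g x) g hg

lemma Δ_I_top_le_bot : Δ (Set.Ici 1) ⊤ ≤ (⊥ : NCL) := by
  refine iSup₂_le fun g hg => ?_
  have key : ∀ n : ℕ, 1 ≤ n → g ⊤ ≤ a n := by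
    intro n hn
    have := hg.2 n hn ⊤
    simpa [f, Nat.one_le_iff_ne_zero.mp hn] using this
  exact (le_all_a key).le

lemma lt_Δ_finite {J : Set ℕ} (hJI : J ⊆ Set.Ici 1) (hfin : J.Finite)
    (hne : J.Nonempty) : (⊥ : NCL) < Δ J ⊤ := by
  obtain ⟨N, hN, hNmax⟩ : ∃ N ∈ J, ∀ i ∈ J, i ≤ N := by
    classical
    refine ⟨hfin.toFinset.max' (by simpa using hne), ?_, ?_⟩
    · have := hfin.toFinset.max'_mem (by simpa using hne)
      simpa using this
    · intro i hi
      exact hfin.toFinset.le_max' i (by simpa using hi)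
  have hmem : f N ∈ {g : NCL → NCL |
      (∀ S : Set NCL, g (sSup S) = sSup (g '' S)) ∧ ∀ i ∈ J, g ≤ f i} := by
    refine ⟨f_sSup N, fun i hi => f_monotone_in_n (hJI hi) (hNmax i hi)⟩
  have h1 : f N ⊤ ≤ Δ J ⊤ := le_iSup₂ (f := fun g _ => g ⊤) (f N) hmem
  have h2 : f N ⊤ = a N := by
    simp [f, Nat.one_le_iff_ne_zero.mp (hJI hN)]
  calc (⊥ : NCL) < a N := bot_lt_a N
    _ = f N ⊤ := h2.symm
    _ ≤ Δ J ⊤ := h1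

end NCL

/-- Non-compactness: there is a complete lattice with a countable family of
space functions, a compact element e and an element c with c ⊒ Δ_I(e) for an
infinite I, but c ⋢ Δ_J(e) (indeed c < Δ_J(e)) for every finite nonempty
J ⊆ I. -/
theorem stmt_11 :
    ∃ (C : Type) (_ : CompleteLattice C) (f : ℕ → C → C) (Δ : Set ℕ → C → C)
      (c e : C) (I : Set ℕ),
      (∀ n, ∀ S : Set C, f n (sSup S) = sSup (f n '' S)) ∧
      (∀ J : Set ℕ, IsGreatest
        {g : C → C | (∀ S : Set C, g (sSup S) = sSup (g '' S)) ∧ ∀ i ∈ J, g ≤ f i}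
        (Δ J)) ∧
      I.Infinite ∧
      (∀ D : Set C, D.Nonempty → DirectedOn (· ≤ ·) D → e ≤ sSup D →
        ∃ d ∈ D, e ≤ d) ∧
      Δ I e ≤ c ∧
      (∀ J : Set ℕ, J ⊆ I → J.Finite → J.Nonempty → c < Δ J e) := by
  refine ⟨NCL, inferInstance, NCL.f, NCL.Δ, ⊥, ⊤, Set.Ici 1,
    NCL.f_sSup, NCL.Δ_isGreatest, Set.Ici_infinite 1, ?_, NCL.Δ_I_top_le_bot,
    fun J h1 h2 h3 => NCL.lt_Δ_finite h1 h2 h3⟩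
  intro D hne _ hle
  have hsup : sSup D = ⊤ := top_le_iff.mp hle
  exact ⟨⊤, NCL.sSup_eq_top hsup, le_rfl⟩
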